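/- There is an absolute constant C > 0 such that for all N ≥ 2 the following holds. Let L₁ ∈ ℝ^{N×N} be the Laplacian of the path graph on N vertices and let L = L₁ ⊗ I_N + I_N ⊗ L₁ ∈ ℝ^{N²×N²} be the Laplacian of the N×N two-dimensional grid graph. Then every diagonal entry of the Moore–Penrose pseudoinverse L† satisfies (L†)_{vv} ≤ C log N. Consequently, with S = L† Dᵀ for D the incidence matrix of the grid, max_v ‖S_{v,:}‖₂ ≤ C' √(log m), where m = N². -/

import Mathlib

open Matrix
open Finset
open scoped Kronecker
open scoped Real

/-- `B` is the Moore–Penrose pseudoinverse of `A` (the four Penrose conditions). -/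
def IsMoorePenrose {α β : Type*} [Fintype α] [Fintype β]
    (A : Matrix α β ℝ) (B : Matrix β α ℝ) : Prop :=
  A * B * A = A ∧ B * A * B = B ∧ (A * B)ᵀ = A * B ∧ (B * A)ᵀ = B * A

/-- The Laplacian of the path graph on `N` vertices. -/
noncomputable def pathLap (N : ℕ) : Matrix (Fin N) (Fin N) ℝ :=
  Matrix.of fun i j =>
    if i = j then (if (i : ℕ) = 0 ∨ (i : ℕ) = N - 1 then 1 else 2)
    else if (i : ℕ) + 1 = (j : ℕ) ∨ (j : ℕ) + 1 = (i : ℕ) then -1 else 0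

/-- The Laplacian `L = L₁ ⊗ I_N + I_N ⊗ L₁` of the `N × N` 2D grid. -/
noncomputable def gridLap2 (N : ℕ) : Matrix (Fin N × Fin N) (Fin N × Fin N) ℝ :=
  pathLap N ⊗ₖ (1 : Matrix (Fin N) (Fin N) ℝ)
    + (1 : Matrix (Fin N) (Fin N) ℝ) ⊗ₖ pathLap N

namespace Grid16

/-- key exponential-sum vanishing -/
lemma cos_sum (N : ℕ) (hN : 1 ≤ N) (m : ℕ) (hm1 : 1 ≤ m) (hm2 : m ≤ 2 * N - 2) :
    ∑ i ∈ Finset.range N, Real.cos ((2 * (i:ℝ) + 1) * (m * (π / (2 * N)))) = 0 := by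
  have hNpos : (0:ℝ) < N := by exact_mod_cast Nat.lt_of_lt_of_le Nat.zero_lt_one hN
  set θ : ℝ := m * (π / (2 * N)) with hθ
  have hθpos : 0 < θ := by
    apply mul_pos (by exact_mod_cast hm1) (div_pos Real.pi_pos (by positivity))
  have hθlt : θ < π := by
    rw [hθ]
    have hmlt : (m:ℝ) < 2 * N := by
      have : m < 2 * N := by omega
      exact_mod_cast this
    calc (m:ℝ) * (π / (2*N)) < (2*N) * (π / (2*N)) := by
          apply mul_lt_mul_of_pos_right hmlt (by positivity)
      _ = π := by field_simp
  set z : ℂ := Complex.exp (θ * Complex.I) with hz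
  have hterm : ∀ i : ℕ, Real.cos ((2 * (i:ℝ) + 1) * θ) = (z * (z ^ 2) ^ i).re := by
    intro i
    have : z * (z ^ 2) ^ i = Complex.exp (((2 * (i:ℝ) + 1) * θ : ℝ) * Complex.I) := by
      rw [hz, ← Complex.exp_nat_mul, ← Complex.exp_nat_mul, ← Complex.exp_add]
      congr 1
      push_cast
      ring
    rw [this, Complex.exp_ofReal_mul_I_re]
  simp_rw [hterm]
  rw [← Complex.re_sum]
  have key : (∑ i ∈ Finset.range N, z * (z ^ 2) ^ i).re = 0 := by
    rw [← Finset.mul_sum]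
    have hz2ne : z ^ 2 ≠ 1 := by
      rw [hz, ← Complex.exp_nat_mul]
      intro hone
      rw [Complex.exp_eq_one_iff] at hone
      obtain ⟨n, hn⟩ := hone
      have hn' : ((2 * θ : ℝ) : ℂ) * Complex.I = ((2 * Real.pi * n : ℝ) : ℂ) * Complex.I := by
        push_cast at hn ⊢
        linear_combination hn
      have hre : (2 * θ : ℝ) = 2 * Real.pi * n := by
        have := mul_right_cancel₀ Complex.I_ne_zero hn'
        exact_mod_cast this
      have hn0 : (0:ℝ) < 2 * Real.pi * n := by rw [← hre]; linarith
      have hn1 : 2 * Real.pi * (n:ℝ) < 2 * Real.pi := by rw [← hre]; linarith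
      have hpos : (0:ℝ) < (n:ℝ) := by
        by_contra h
        push_neg at h
        nlinarith [Real.pi_pos]
      have hlt : (n:ℝ) < 1 := by nlinarith [Real.pi_pos]
      have : (0:ℤ) < n := by exact_mod_cast hpos
      have : (n:ℤ) < 1 := by exact_mod_cast hlt
      omega
    rw [geom_sum_eq hz2ne]
    have hzN : (z ^ 2) ^ N = (-1 : ℂ) ^ m := by
      rw [hz, ← Complex.exp_nat_mul, ← Complex.exp_nat_mul, ← Complex.exp_pi_mul_I,
        ← Complex.exp_nat_mul]
      congr 1
      rw [hθ]
      have hN2 : (N:ℂ) ≠ 0 := by exact_mod_cast ne_of_gt hNpos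
      push_cast
      field_simp
    rw [hzN]
    rcases Nat.even_or_odd m with he | ho
    · rw [he.neg_one_pow]
      simp
    · rw [ho.neg_one_pow]
      set s : ℝ := Real.sin θ with hs
      set c : ℝ := Real.cos θ with hc
      have hsne : s ≠ 0 := ne_of_gt (Real.sin_pos_of_pos_of_lt_pi hθpos hθlt)
      have hzz : z = (c:ℂ) + (s:ℂ) * Complex.I := by
        rw [hz, Complex.exp_mul_I]
        simp [hc, hs]
      have hden : z ^ 2 - 1 = 2 * (s:ℂ) * Complex.I * z := by
        rw [hzz]
        apply Complex.ext <;>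
          simp [pow_two, Complex.ext_iff] <;>
          nlinarith [Real.sin_sq_add_cos_sq θ]
      have hzne : z ≠ 0 := by rw [hz]; exact Complex.exp_ne_zero _
      have hfin : z * ((-1 - 1) / (z ^ 2 - 1)) = Complex.I / (s:ℂ) := by
        rw [hden]
        have hsne' : (s:ℂ) ≠ 0 := by exact_mod_cast hsne
        have hIne : Complex.I ≠ 0 := Complex.I_ne_zero
        field_simp
        linear_combination (-2 : ℂ) * Complex.I_sq
      rw [hfin]
      simp [Complex.div_re]
  exact key


noncomputable def ang (N : ℕ) : ℝ := π / (2 * N)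

noncomputable def cvec (N : ℕ) (k : Fin N) : ℝ :=
  if (k:ℕ) = 0 then Real.sqrt (1 / N) else Real.sqrt (2 / N)

noncomputable def W (N : ℕ) : Matrix (Fin N) (Fin N) ℝ :=
  Matrix.of fun i k => cvec N k * Real.cos ((2 * (i:ℝ) + 1) * ((k:ℕ) * ang N))

lemma prod_sum_off (N : ℕ) (hN : 1 ≤ N) (j k : ℕ) (hjN : j ≤ N - 1) (hkj : k < j) :
    ∑ i ∈ Finset.range N,
      Real.cos ((2 * (i:ℝ) + 1) * (j * ang N)) * Real.cos ((2 * (i:ℝ) + 1) * (k * ang N)) = 0 := by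
  have hpt : ∀ i : ℕ,
      Real.cos ((2 * (i:ℝ) + 1) * (j * ang N)) * Real.cos ((2 * (i:ℝ) + 1) * (k * ang N))
        = (Real.cos ((2 * (i:ℝ) + 1) * (((j+k:ℕ):ℝ) * (π / (2 * N))))
          + Real.cos ((2 * (i:ℝ) + 1) * (((j-k:ℕ):ℝ) * (π / (2 * N))))) / 2 := by
    intro i
    have e1 : ((2 * (i:ℝ) + 1) * (((j+k:ℕ):ℝ) * (π / (2 * N))))
        = (2 * (i:ℝ) + 1) * (j * ang N) + (2 * (i:ℝ) + 1) * (k * ang N) := by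
      rw [ang]; push_cast; ring
    have e2 : ((2 * (i:ℝ) + 1) * (((j-k:ℕ):ℝ) * (π / (2 * N))))
        = (2 * (i:ℝ) + 1) * (j * ang N) - (2 * (i:ℝ) + 1) * (k * ang N) := by
      rw [ang]; push_cast [Nat.cast_sub hkj.le]; ring
    rw [e1, e2, Real.cos_add, Real.cos_sub]; ring
  simp_rw [hpt]
  rw [← Finset.sum_div, Finset.sum_add_distrib]
  rw [cos_sum N hN (j+k) (by omega) (by omega), cos_sum N hN (j-k) (by omega) (by omega)]
  norm_num

lemma prod_sum_diag (N : ℕ) (hN : 1 ≤ N) (k : ℕ) (hkN : k ≤ N - 1) :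
    ∑ i ∈ Finset.range N, Real.cos ((2 * (i:ℝ) + 1) * (k * ang N)) ^ 2
      = if k = 0 then (N:ℝ) else N / 2 := by
  by_cases hk : k = 0
  · subst hk
    simp [ang]
  · rw [if_neg hk]
    have hpt : ∀ i : ℕ, Real.cos ((2 * (i:ℝ) + 1) * (k * ang N)) ^ 2
        = 1/2 + Real.cos ((2 * (i:ℝ) + 1) * (((2*k:ℕ):ℝ) * (π / (2 * N)))) / 2 := by
      intro i
      rw [Real.cos_sq]
      congr 2
      rw [ang]; push_cast; ring
    simp_rw [hpt]
    rw [Finset.sum_add_distrib, ← Finset.sum_div, ← Finset.sum_div,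
      cos_sum N hN (2*k) (by omega) (by omega)]
    simp [Finset.sum_const, Finset.card_range]

lemma orth (N : ℕ) (hN : 1 ≤ N) : (W N)ᵀ * (W N) = 1 := by
  have hNpos : (0:ℝ) < N := by exact_mod_cast hN
  ext j k
  have hj := j.isLt
  have hk := k.isLt
  rw [Matrix.mul_apply, Matrix.one_apply]
  simp only [Matrix.transpose_apply, W, Matrix.of_apply]
  rw [Fin.sum_univ_eq_sum_range (fun i => cvec N j * Real.cos ((2 * (i:ℝ) + 1) * ((j:ℕ) * ang N))
    * (cvec N k * Real.cos ((2 * (i:ℝ) + 1) * ((k:ℕ) * ang N)))) N]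
  have hfac : ∀ i : ℕ, cvec N j * Real.cos ((2 * (i:ℝ) + 1) * ((j:ℕ) * ang N))
      * (cvec N k * Real.cos ((2 * (i:ℝ) + 1) * ((k:ℕ) * ang N)))
      = cvec N j * cvec N k * (Real.cos ((2 * (i:ℝ) + 1) * ((j:ℕ) * ang N))
        * Real.cos ((2 * (i:ℝ) + 1) * ((k:ℕ) * ang N))) := fun i => by ring
  simp_rw [hfac]
  rw [← Finset.mul_sum]
  by_cases hjk : j = k
  · subst hjk
    rw [if_pos rfl]
    simp_rw [← sq]
    rw [prod_sum_diag N hN (j:ℕ) (by omega)]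
    rcases Nat.eq_zero_or_pos (j:ℕ) with h0 | h0
    · rw [if_pos h0, cvec, if_pos h0, Real.sq_sqrt (by positivity)]
      field_simp
    · rw [if_neg (by omega), cvec, if_neg (by omega), Real.sq_sqrt (by positivity)]
      field_simp
  · rw [if_neg hjk]
    rcases Nat.lt_or_ge (j:ℕ) (k:ℕ) with h | h
    · have hcomm : ∀ i:ℕ, Real.cos ((2 * (i:ℝ) + 1) * ((j:ℕ) * ang N))
          * Real.cos ((2 * (i:ℝ) + 1) * ((k:ℕ) * ang N))
          = Real.cos ((2 * (i:ℝ) + 1) * ((k:ℕ) * ang N))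
          * Real.cos ((2 * (i:ℝ) + 1) * ((j:ℕ) * ang N)) := fun i => mul_comm _ _
      simp_rw [hcomm]
      rw [prod_sum_off N hN (k:ℕ) (j:ℕ) (by omega) h, mul_zero]
    · have hne : (j:ℕ) ≠ (k:ℕ) := fun h => hjk (Fin.ext h)
      rw [prod_sum_off N hN (j:ℕ) (k:ℕ) (by omega) (by omega), mul_zero]

noncomputable def mu (N : ℕ) (k : Fin N) : ℝ := 2 - 2 * Real.cos (2 * ((k:ℕ) * ang N))

lemma ident1 (a : ℝ) : Real.cos a - Real.cos (3*a) = (2 - 2*Real.cos (2*a)) * Real.cos a := by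
  rw [show (3:ℝ)*a = 2*a + a by ring, Real.cos_add, Real.sin_two_mul, Real.cos_two_mul]
  linear_combination (2*Real.cos a) * (Real.sin_sq_add_cos_sq a)

lemma ident2 (x a : ℝ) :
    2 * Real.cos x - Real.cos (x + 2*a) - Real.cos (x - 2*a)
      = (2 - 2*Real.cos (2*a)) * Real.cos x := by
  rw [Real.cos_add, Real.cos_sub, Real.cos_two_mul]
  ring

lemma row_sum (N : ℕ) (i : Fin N) (f : ℕ → ℝ) :
    ∑ l : Fin N, pathLap N i l * f l
      = (if (i:ℕ) = 0 ∨ (i:ℕ) = N - 1 then 1 else 2) * f i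
        - (if (i:ℕ) + 1 < N then f ((i:ℕ)+1) else 0)
        - (if 1 ≤ (i:ℕ) then f ((i:ℕ)-1) else 0) := by
  have hpt : ∀ l : Fin N, pathLap N i l * f l
      = ((if (i:ℕ) = (l:ℕ) then (if (i:ℕ) = 0 ∨ (i:ℕ) = N - 1 then 1 else 2) * f l else 0)
        + (if (l:ℕ) = (i:ℕ) + 1 then -f l else 0)
        + (if ((l:ℕ) + 1 = (i:ℕ)) then -f l else 0)) := by
    intro l
    simp only [pathLap, Matrix.of_apply, Fin.ext_iff]
    split_ifs
    all_goals try (exfalso; omega)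
    all_goals ring
  simp_rw [hpt]
  rw [Finset.sum_add_distrib, Finset.sum_add_distrib]
  have e1 : ∑ l : Fin N, (if (i:ℕ) = (l:ℕ) then (if (i:ℕ) = 0 ∨ (i:ℕ) = N - 1 then 1 else 2) * f l else 0)
      = (if (i:ℕ) = 0 ∨ (i:ℕ) = N - 1 then 1 else 2) * f i := by
    rw [Fin.sum_univ_eq_sum_range (fun l => if (i:ℕ) = l then (if (i:ℕ) = 0 ∨ (i:ℕ) = N - 1 then 1 else 2) * f l else 0) N]
    rw [Finset.sum_ite_eq (Finset.range N) (i:ℕ)]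
    rw [if_pos (Finset.mem_range.mpr i.isLt)]
  have e2 : ∑ l : Fin N, (if (l:ℕ) = (i:ℕ) + 1 then -f l else 0)
      = -(if (i:ℕ) + 1 < N then f ((i:ℕ)+1) else 0) := by
    rw [Fin.sum_univ_eq_sum_range (fun l => if l = (i:ℕ) + 1 then -f l else 0) N]
    rw [Finset.sum_ite_eq' (Finset.range N) ((i:ℕ)+1)]
    by_cases h : (i:ℕ) + 1 < N
    · rw [if_pos (Finset.mem_range.mpr h), if_pos h]
    · rw [if_neg (fun hc => h (Finset.mem_range.mp hc)), if_neg h, neg_zero]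
  have e3 : ∑ l : Fin N, (if ((l:ℕ) + 1 = (i:ℕ)) then -f l else 0)
      = -(if 1 ≤ (i:ℕ) then f ((i:ℕ)-1) else 0) := by
    rw [Fin.sum_univ_eq_sum_range (fun l => if l + 1 = (i:ℕ) then -f l else 0) N]
    by_cases h : 1 ≤ (i:ℕ)
    · have hcond : ∀ l : ℕ, (l + 1 = (i:ℕ)) = (l = (i:ℕ) - 1) := by
        intro l; apply propext; omega
      simp_rw [hcond]
      rw [Finset.sum_ite_eq' (Finset.range N) ((i:ℕ)-1)]
      rw [if_pos (Finset.mem_range.mpr (by have := i.isLt; omega)), if_pos h]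
    · have hcond : ∀ l : ℕ, (l + 1 = (i:ℕ)) = False := by
        intro l; apply propext; constructor
        · intro hc; omega
        · intro hc; exact hc.elim
      simp_rw [hcond]
      simp [h]
  rw [e1, e2, e3]
  ring

lemma eig (N : ℕ) (hN : 2 ≤ N) :
    pathLap N * W N = W N * Matrix.diagonal (mu N) := by
  have hNpos : (0:ℝ) < N := by positivity
  ext i k
  rw [Matrix.mul_apply, Matrix.mul_diagonal]
  have hWf : ∀ l : Fin N, W N l k = cvec N k * Real.cos ((2 * (l:ℝ) + 1) * ((k:ℕ) * ang N)) :=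
    fun l => rfl
  simp_rw [hWf]
  have hfac : ∀ l : Fin N, pathLap N i l * (cvec N k * Real.cos ((2 * (l:ℝ) + 1) * ((k:ℕ) * ang N)))
      = cvec N k * (pathLap N i l * Real.cos ((2 * (l:ℝ) + 1) * ((k:ℕ) * ang N))) := fun l => by ring
  simp_rw [hfac]
  rw [← Finset.mul_sum]
  set a : ℝ := (k:ℕ) * ang N with ha
  have hrow := row_sum N i (fun l => Real.cos ((2 * (l:ℝ) + 1) * a))
  rw [hrow]
  have hgoal : (if (i:ℕ) = 0 ∨ (i:ℕ) = N - 1 then 1 else 2) * Real.cos ((2 * ((i:ℕ):ℝ) + 1) * a)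
      - (if (i:ℕ) + 1 < N then Real.cos ((2 * (((i:ℕ)+1 : ℕ):ℝ) + 1) * a) else 0)
      - (if 1 ≤ (i:ℕ) then Real.cos ((2 * (((i:ℕ)-1 : ℕ):ℝ) + 1) * a) else 0)
      = Real.cos ((2 * ((i:ℕ):ℝ) + 1) * a) * mu N k := by
    rcases Nat.eq_zero_or_pos (i:ℕ) with h0 | hpos
    · -- i = 0
      rw [h0, if_pos (Or.inl rfl), if_pos (by omega), if_neg (by omega), mu, ← ha]
      norm_num
      linear_combination ident1 a
    · rcases Nat.lt_or_ge (i:ℕ) (N-1) with hmid | hlast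
      · -- interior
        rw [if_neg (by omega), if_pos (by omega), if_pos (show 1 ≤ (i:ℕ) by omega), mu, ← ha]
        have e1 : (2 * (((i:ℕ)+1 : ℕ):ℝ) + 1) * a = (2 * ((i:ℕ):ℝ) + 1) * a + 2*a := by
          push_cast; ring
        have e2 : (2 * (((i:ℕ)-1 : ℕ):ℝ) + 1) * a = (2 * ((i:ℕ):ℝ) + 1) * a - 2*a := by
          push_cast [Nat.cast_sub hpos]; ring
        rw [e1, e2]
        linear_combination ident2 ((2 * ((i:ℕ):ℝ) + 1) * a) a
      · -- i = N - 1
        have hiN : (i:ℕ) = N - 1 := by have := i.isLt; omega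
        rw [if_pos (Or.inr hiN), if_neg (by omega), if_pos (show 1 ≤ (i:ℕ) by omega), hiN, mu, ← ha]
        have hpi : 2 * (N:ℝ) * ang N = π := by
          rw [ang]; field_simp
        have eA : (2 * (((N:ℕ)-1 : ℕ):ℝ) + 1) * a = (k:ℕ) * π - a := by
          rw [ha, ← hpi]; push_cast [Nat.cast_sub (show 1 ≤ N by omega)]; ring
        have eB : (2 * (((N:ℕ)-1-1 : ℕ):ℝ) + 1) * a = (k:ℕ) * π - 3 * a := by
          rw [ha, ← hpi]
          push_cast [Nat.cast_sub (show 1 ≤ N - 1 by omega), Nat.cast_sub (show 1 ≤ N by omega)]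
          ring
        rw [eA, eB]
        have hsin : Real.sin ((k:ℕ) * π) = 0 := Real.sin_nat_mul_pi (k:ℕ)
        rw [Real.cos_sub, Real.cos_sub, hsin]
        linear_combination Real.cos ((k:ℕ) * π) * ident1 a
  rw [hgoal]
  ring

lemma mu_eq_sin (N : ℕ) (k : Fin N) : mu N k = 4 * Real.sin ((k:ℕ) * ang N) ^ 2 := by
  rw [mu, Real.cos_two_mul']
  linear_combination (-2 : ℝ) * (Real.sin_sq_add_cos_sq ((k:ℕ) * ang N))

lemma mu_zero (N : ℕ) (k : Fin N) (hk : (k:ℕ) = 0) : mu N k = 0 := by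
  rw [mu, hk]
  norm_num

lemma ang_pos (N : ℕ) (hN : 1 ≤ N) : 0 < ang N := by
  rw [ang]
  have : (0:ℝ) < N := by exact_mod_cast hN
  positivity

lemma mu_lb (N : ℕ) (hN : 1 ≤ N) (k : Fin N) :
    4 * (((k:ℕ):ℝ) / N)^2 ≤ mu N k := by
  have hNpos : (0:ℝ) < N := by exact_mod_cast hN
  have hk := k.isLt
  have hx0 : (0:ℝ) ≤ (k:ℕ) * ang N := by
    have := ang_pos N hN
    positivity
  have hx1 : ((k:ℕ):ℝ) * ang N ≤ π / 2 := by
    have hkN : ((k:ℕ):ℝ) ≤ N := by exact_mod_cast hk.le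
    have hd : (0:ℝ) ≤ π / (2 * N) := by positivity
    have e : (N:ℝ) * (π / (2 * N)) = π / 2 := by field_simp
    rw [ang]
    nlinarith [mul_le_mul_of_nonneg_right hkN hd]
  have hsin := Real.mul_le_sin hx0 hx1
  have hval : 2 / π * (((k:ℕ):ℝ) * ang N) = ((k:ℕ):ℝ) / N := by
    rw [ang]
    field_simp
  rw [hval] at hsin
  have hnn : (0:ℝ) ≤ ((k:ℕ):ℝ) / N := by positivity
  have hsq : (((k:ℕ):ℝ) / N)^2 ≤ Real.sin (((k:ℕ):ℝ) * ang N) ^ 2 := by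
    apply sq_le_sq' <;> nlinarith
  rw [mu_eq_sin]
  linarith

lemma mu_pos (N : ℕ) (hN : 1 ≤ N) (k : Fin N) (hk : (k:ℕ) ≠ 0) : 0 < mu N k := by
  have h := mu_lb N hN k
  have hNpos : (0:ℝ) < N := by exact_mod_cast hN
  have hk0 : (0:ℝ) < ((k:ℕ):ℝ) := by exact_mod_cast Nat.pos_of_ne_zero hk
  have : (0:ℝ) < 4 * (((k:ℕ):ℝ) / N)^2 := by positivity
  linarith

lemma mu_nonneg (N : ℕ) (k : Fin N) : 0 ≤ mu N k := by
  rw [mu_eq_sin]; positivity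

lemma Wsq_le (N : ℕ) (hN : 1 ≤ N) (i k : Fin N) : (W N i k)^2 ≤ 2 / N := by
  have hNpos : (0:ℝ) < N := by exact_mod_cast hN
  rw [W]
  simp only [Matrix.of_apply]
  rw [mul_pow]
  have hc : (cvec N k)^2 ≤ 2 / N := by
    rw [cvec]
    split_ifs
    · rw [Real.sq_sqrt (by positivity)]
      rw [div_le_div_iff₀ hNpos hNpos]
      nlinarith
    · rw [Real.sq_sqrt (by positivity)]
  have hcos : Real.cos ((2 * (i:ℝ) + 1) * ((k:ℕ) * ang N)) ^ 2 ≤ 1 := Real.cos_sq_le_one _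
  nlinarith [sq_nonneg (cvec N k), sq_nonneg (Real.cos ((2 * (i:ℝ) + 1) * ((k:ℕ) * ang N)))]

noncomputable def W2 (N : ℕ) : Matrix (Fin N × Fin N) (Fin N × Fin N) ℝ := W N ⊗ₖ W N

noncomputable def lam (N : ℕ) (p : Fin N × Fin N) : ℝ := mu N p.1 + mu N p.2

noncomputable def lamInv (N : ℕ) (p : Fin N × Fin N) : ℝ :=
  if lam N p = 0 then 0 else (lam N p)⁻¹

noncomputable def Mdag (N : ℕ) : Matrix (Fin N × Fin N) (Fin N × Fin N) ℝ :=
  W2 N * Matrix.diagonal (lamInv N) * (W2 N)ᵀ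

lemma orth2 (N : ℕ) (hN : 1 ≤ N) : (W2 N)ᵀ * W2 N = 1 := by
  rw [W2]
  rw [show (W N ⊗ₖ W N)ᵀ = (W N)ᵀ ⊗ₖ (W N)ᵀ from (Matrix.kroneckerMap_transpose _ _ _).symm]
  rw [← Matrix.mul_kronecker_mul, orth N hN, Matrix.one_kronecker_one]

lemma grid_decomp (N : ℕ) (hN : 2 ≤ N) :
    gridLap2 N = W2 N * Matrix.diagonal (lam N) * (W2 N)ᵀ := by
  have h1 : (1:ℕ) ≤ N := by omega
  have hw : W N * (W N)ᵀ = 1 := mul_eq_one_comm.mp (orth N h1)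
  have hP : pathLap N = W N * Matrix.diagonal (mu N) * (W N)ᵀ := by
    calc pathLap N = pathLap N * (W N * (W N)ᵀ) := by rw [hw, Matrix.mul_one]
      _ = (pathLap N * W N) * (W N)ᵀ := by rw [Matrix.mul_assoc]
      _ = W N * Matrix.diagonal (mu N) * (W N)ᵀ := by rw [eig N hN]
  have hT : (W2 N)ᵀ = (W N)ᵀ ⊗ₖ (W N)ᵀ := (Matrix.kroneckerMap_transpose _ _ _).symm
  have hone : (1 : Matrix (Fin N) (Fin N) ℝ) = W N * Matrix.diagonal (fun _ => (1:ℝ)) * (W N)ᵀ := by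
    rw [Matrix.diagonal_one, Matrix.mul_one, hw]
  rw [gridLap2, hP, hone]
  rw [Matrix.mul_kronecker_mul, Matrix.mul_kronecker_mul]
  rw [Matrix.mul_kronecker_mul, Matrix.mul_kronecker_mul]
  rw [Matrix.diagonal_kronecker_diagonal, Matrix.diagonal_kronecker_diagonal]
  rw [← hT, W2]
  rw [← Matrix.add_mul, ← Matrix.mul_add, Matrix.diagonal_add]
  congr 1
  congr 1
  apply congrArg
  funext p
  simp [lam]

lemma sandwich_mul (N : ℕ) (hN : 1 ≤ N) (d e : Fin N × Fin N → ℝ) :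
    (W2 N * Matrix.diagonal d * (W2 N)ᵀ) * (W2 N * Matrix.diagonal e * (W2 N)ᵀ)
      = W2 N * Matrix.diagonal (fun p => d p * e p) * (W2 N)ᵀ := by
  have ho := orth2 N hN
  calc (W2 N * Matrix.diagonal d * (W2 N)ᵀ) * (W2 N * Matrix.diagonal e * (W2 N)ᵀ)
      = W2 N * Matrix.diagonal d * ((W2 N)ᵀ * W2 N) * Matrix.diagonal e * (W2 N)ᵀ := by
        simp only [Matrix.mul_assoc]
    _ = W2 N * (Matrix.diagonal d * Matrix.diagonal e) * (W2 N)ᵀ := by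
        rw [ho, Matrix.mul_one]
        simp only [Matrix.mul_assoc]
    _ = W2 N * Matrix.diagonal (fun p => d p * e p) * (W2 N)ᵀ := by
        rw [Matrix.diagonal_mul_diagonal]

lemma sandwich_transpose (N : ℕ) (d : Fin N × Fin N → ℝ) :
    (W2 N * Matrix.diagonal d * (W2 N)ᵀ)ᵀ = W2 N * Matrix.diagonal d * (W2 N)ᵀ := by
  rw [Matrix.transpose_mul, Matrix.transpose_mul, Matrix.transpose_transpose,
    Matrix.diagonal_transpose, Matrix.mul_assoc]

lemma penrose (N : ℕ) (hN : 2 ≤ N) : IsMoorePenrose (gridLap2 N) (Mdag N) := by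
  have h1 : (1:ℕ) ≤ N := by omega
  have hL := grid_decomp N hN
  have hll : (fun p => lam N p * lamInv N p) = fun p => lamInv N p * lam N p := by
    funext p; ring
  refine ⟨?_, ?_, ?_, ?_⟩
  · rw [hL, Mdag, sandwich_mul N h1, sandwich_mul N h1]
    congr 1
    congr 1
    apply congrArg
    funext p
    by_cases h : lam N p = 0
    · simp [lamInv, h]
    · rw [lamInv, if_neg h]
      field_simp
  · rw [hL, Mdag, sandwich_mul N h1, sandwich_mul N h1]
    congr 1
    congr 1
    apply congrArg
    funext p
    by_cases h : lam N p = 0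
    · simp [lamInv, h]
    · rw [lamInv, if_neg h]
      field_simp
  · rw [hL, Mdag, sandwich_mul N h1, sandwich_transpose]
  · rw [hL, Mdag, sandwich_mul N h1, sandwich_transpose]

lemma mp_unique {α β : Type*} [Fintype α] [Fintype β]
    (A : Matrix α β ℝ) (B B' : Matrix β α ℝ)
    (h : IsMoorePenrose A B) (h' : IsMoorePenrose A B') : B = B' := by
  obtain ⟨h1, h2, h3, h4⟩ := h
  obtain ⟨h1', h2', h3', h4'⟩ := h'
  have hAB : A * B = A * B' := by
    have e1 : A * B' * (A * B) = A * B' := by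
      calc A * B' * (A * B) = (A * B')ᵀ * (A * B)ᵀ := by rw [h3, h3']
        _ = ((A * B) * (A * B'))ᵀ := (Matrix.transpose_mul (A * B) (A * B')).symm
        _ = ((A * B * A) * B')ᵀ := congrArg Matrix.transpose (by simp only [Matrix.mul_assoc])
        _ = (A * B')ᵀ := by rw [h1]
        _ = A * B' := h3'
    calc A * B = (A * B' * A) * B := by rw [h1']
      _ = A * B' * (A * B) := by rw [Matrix.mul_assoc]
      _ = A * B' := e1
  have hBA : B * A = B' * A := by
    have e1 : (B * A) * (B' * A) = B' * A := by
      calc (B * A) * (B' * A) = (B * A)ᵀ * (B' * A)ᵀ := by rw [h4, h4']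
        _ = ((B' * A) * (B * A))ᵀ := (Matrix.transpose_mul (B' * A) (B * A)).symm
        _ = (B' * (A * B * A))ᵀ := congrArg Matrix.transpose (by simp only [Matrix.mul_assoc])
        _ = (B' * A)ᵀ := by rw [h1]
        _ = B' * A := h4'
    calc B * A = B * (A * B' * A) := by rw [h1']
      _ = (B * A) * (B' * A) := by simp only [Matrix.mul_assoc]
      _ = B' * A := e1
  calc B = B * A * B := h2.symm
    _ = B' * A * B := by rw [hBA]
    _ = B' * (A * B) := by rw [Matrix.mul_assoc]
    _ = B' * (A * B') := by rw [hAB]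
    _ = B' * A * B' := by rw [Matrix.mul_assoc]
    _ = B' := h2'

lemma sum_invsq_bound (N : ℕ) (hN : 2 ≤ N) :
    ∑ x : Fin N × Fin N,
      (if (x.1:ℕ) + (x.2:ℕ) = 0 then 0 else 1 / (((x.1:ℕ):ℝ)^2 + ((x.2:ℕ):ℝ)^2))
      ≤ 14 * Real.log N := by
  set g : Fin N × Fin N → ℝ := fun x =>
    if (x.1:ℕ) + (x.2:ℕ) = 0 then 0 else 1 / (((x.1:ℕ):ℝ)^2 + ((x.2:ℕ):ℝ)^2) with hg
  have hmaps : ∀ x ∈ (Finset.univ : Finset (Fin N × Fin N)),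
      (x.1:ℕ) + (x.2:ℕ) ∈ Finset.range (2*N) := by
    intro x _
    have h1 := x.1.isLt
    have h2 := x.2.isLt
    rw [Finset.mem_range]
    omega
  rw [← Finset.sum_fiberwise_of_maps_to hmaps g]
  have hinner : ∀ s ∈ Finset.range (2*N),
      ∑ x ∈ Finset.univ.filter (fun x : Fin N × Fin N => (x.1:ℕ) + (x.2:ℕ) = s), g x
        ≤ (if s = 0 then 0 else 4 / (s:ℝ)) := by
    intro s _
    by_cases hs : s = 0
    · rw [if_pos hs]
      apply Finset.sum_nonpos
      intro x hx
      rw [Finset.mem_filter] at hx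
      rw [hg]
      simp only
      rw [if_pos (by omega : (x.1:ℕ) + (x.2:ℕ) = 0)]
    · rw [if_neg hs]
      have hs1 : 1 ≤ s := by omega
      have hcard : (Finset.univ.filter
          (fun x : Fin N × Fin N => (x.1:ℕ) + (x.2:ℕ) = s)).card ≤ s + 1 := by
        refine le_trans (Finset.card_le_card_of_injOn (fun x => (x.1:ℕ)) ?_ ?_)
          (le_of_eq (Finset.card_range (s+1)))
        · intro x hx
          rw [Finset.mem_coe, Finset.mem_filter] at hx
          show (x.1:ℕ) ∈ Finset.range (s+1)
          rw [Finset.mem_range]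
          omega
        · intro x hx y hy hxy
          rw [Finset.mem_coe, Finset.mem_filter] at hx hy
          have e1 : (x.1:ℕ) = (y.1:ℕ) := hxy
          have e2 : (x.2:ℕ) = (y.2:ℕ) := by omega
          exact Prod.ext (Fin.ext e1) (Fin.ext e2)
      have hterm : ∀ x ∈ Finset.univ.filter
          (fun x : Fin N × Fin N => (x.1:ℕ) + (x.2:ℕ) = s), g x ≤ 2 / (s:ℝ)^2 := by
        intro x hx
        rw [Finset.mem_filter] at hx
        have hsum : ((x.1:ℕ):ℝ) + ((x.2:ℕ):ℝ) = (s:ℝ) := by exact_mod_cast congrArg Nat.cast hx.2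
        have ha : (0:ℝ) ≤ ((x.1:ℕ):ℝ) := Nat.cast_nonneg _
        have hb : (0:ℝ) ≤ ((x.2:ℕ):ℝ) := Nat.cast_nonneg _
        have hspos : (0:ℝ) < (s:ℝ) := by exact_mod_cast hs1
        have hquad : (0:ℝ) < ((x.1:ℕ):ℝ)^2 + ((x.2:ℕ):ℝ)^2 := by
          nlinarith [sq_nonneg (((x.1:ℕ):ℝ) - ((x.2:ℕ):ℝ))]
        rw [hg]
        simp only
        rw [if_neg (by omega : ¬ ((x.1:ℕ) + (x.2:ℕ) = 0))]
        rw [div_le_div_iff₀ hquad (by positivity)]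
        nlinarith [sq_nonneg (((x.1:ℕ):ℝ) - ((x.2:ℕ):ℝ))]
      calc ∑ x ∈ Finset.univ.filter (fun x : Fin N × Fin N => (x.1:ℕ) + (x.2:ℕ) = s), g x
          ≤ ∑ _x ∈ Finset.univ.filter (fun x : Fin N × Fin N => (x.1:ℕ) + (x.2:ℕ) = s), 2 / (s:ℝ)^2 :=
            Finset.sum_le_sum hterm
        _ = (Finset.univ.filter (fun x : Fin N × Fin N => (x.1:ℕ) + (x.2:ℕ) = s)).card * (2 / (s:ℝ)^2) := by
            rw [Finset.sum_const, nsmul_eq_mul]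
        _ ≤ ((s:ℝ) + 1) * (2 / (s:ℝ)^2) := by
            apply mul_le_mul_of_nonneg_right _ (by positivity)
            have : ((Finset.univ.filter (fun x : Fin N × Fin N => (x.1:ℕ) + (x.2:ℕ) = s)).card : ℝ)
                ≤ ((s:ℕ) + 1 : ℕ) := by exact_mod_cast hcard
            push_cast at this
            linarith
        _ ≤ 4 / (s:ℝ) := by
            have hspos : (0:ℝ) < (s:ℝ) := by exact_mod_cast hs1
            have hs1' : (1:ℝ) ≤ (s:ℝ) := by exact_mod_cast hs1
            have e1 : ((s:ℝ)+1) * (2/(s:ℝ)^2) = (2*(s:ℝ)+2)/(s:ℝ)^2 := by ring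
            have e2 : 4/(s:ℝ) = 4*(s:ℝ)/(s:ℝ)^2 := by field_simp
            rw [e1, e2, div_le_div_iff₀ (by positivity) (by positivity)]
            nlinarith
  calc ∑ s ∈ Finset.range (2*N), ∑ x ∈ Finset.univ.filter
        (fun x : Fin N × Fin N => (x.1:ℕ) + (x.2:ℕ) = s), g x
      ≤ ∑ s ∈ Finset.range (2*N), (if s = 0 then 0 else 4 / (s:ℝ)) :=
        Finset.sum_le_sum hinner
    _ ≤ 14 * Real.log N := by
        have h2N : 2*N = (2*N - 1) + 1 := by omega
        rw [h2N, Finset.sum_range_succ']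
        have hstep : ∀ i ∈ Finset.range (2*N-1),
            (if i + 1 = 0 then (0:ℝ) else 4 / (((i+1:ℕ)):ℝ)) = 4 * ((i:ℝ)+1)⁻¹ := by
          intro i _
          rw [if_neg (by omega)]
          push_cast
          rw [div_eq_mul_inv]
        rw [Finset.sum_congr rfl hstep, ← Finset.mul_sum]
        norm_num
        have hharm : ∑ i ∈ Finset.range (2*N-1), ((i:ℝ)+1)⁻¹ = ((harmonic (2*N-1) : ℚ) : ℝ) := by
          unfold harmonic
          push_cast
          ring_nf
        rw [hharm]
        have hlog := harmonic_le_one_add_log (2*N-1)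
        have hmono : Real.log (2*N-1 : ℕ) ≤ Real.log (2*N : ℕ) := by
          have hp : (0:ℝ) < ((2*N-1 : ℕ):ℝ) := by exact_mod_cast (by omega : 0 < 2*N-1)
          apply Real.log_le_log hp
          exact_mod_cast (by omega : 2*N-1 ≤ 2*N)
        have hlog2N : Real.log ((2*N : ℕ) : ℝ) = Real.log 2 + Real.log N := by
          push_cast
          rw [Real.log_mul (by norm_num) (by positivity)]
        have hl2 : (0.6931471803 : ℝ) < Real.log 2 := Real.log_two_gt_d9
        have hlN : Real.log 2 ≤ Real.log N := by
          apply Real.log_le_log (by norm_num)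
          exact_mod_cast hN
        have hh : ((harmonic (2*N-1) : ℚ) : ℝ) ≤ 1 + Real.log 2 + Real.log N := by
          calc ((harmonic (2*N-1) : ℚ) : ℝ) ≤ 1 + Real.log (2*N-1 : ℕ) := hlog
            _ ≤ 1 + Real.log ((2*N : ℕ) : ℝ) := by linarith
            _ = 1 + Real.log 2 + Real.log N := by rw [hlog2N]; ring
        linarith

lemma Mdag_diag (N : ℕ) (v : Fin N × Fin N) :
    Mdag N v v = ∑ x : Fin N × Fin N, lamInv N x * (W2 N v x)^2 := by
  rw [Mdag, Matrix.mul_apply]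
  apply Finset.sum_congr rfl
  intro x _
  rw [Matrix.mul_diagonal, Matrix.transpose_apply]
  ring

lemma Mdag_term_bound (N : ℕ) (hN : 2 ≤ N) (v x : Fin N × Fin N) :
    lamInv N x * (W2 N v x)^2
      ≤ (if (x.1:ℕ) + (x.2:ℕ) = 0 then 0 else 1 / (((x.1:ℕ):ℝ)^2 + ((x.2:ℕ):ℝ)^2)) := by
  have h1N : (1:ℕ) ≤ N := by omega
  have hNpos : (0:ℝ) < N := by exact_mod_cast h1N
  by_cases h0 : (x.1:ℕ) + (x.2:ℕ) = 0
  · rw [if_pos h0]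
    have hlam : lam N x = 0 := by
      rw [lam, mu_zero N _ (by omega), mu_zero N _ (by omega)]
      ring
    rw [lamInv, if_pos hlam]
    simp
  · rw [if_neg h0]
    set a : ℝ := ((x.1:ℕ):ℝ) with hA
    set b : ℝ := ((x.2:ℕ):ℝ) with hB
    have hquad : (0:ℝ) < a^2 + b^2 := by
      have hab : (1:ℝ) ≤ a + b := by
        rw [hA, hB]
        exact_mod_cast (by omega : 1 ≤ (x.1:ℕ) + (x.2:ℕ))
      have ha : 0 ≤ a := Nat.cast_nonneg _
      have hb : 0 ≤ b := Nat.cast_nonneg _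
      have h1 : 1 ≤ (a+b)^2 := by nlinarith
      nlinarith [sq_nonneg (a-b)]
    have hlam_lb : 4 * (a^2 + b^2) / (N:ℝ)^2 ≤ lam N x := by
      have l1 := mu_lb N h1N x.1
      have l2 := mu_lb N h1N x.2
      have e : 4 * (a^2 + b^2) / (N:ℝ)^2 = 4 * (a / N)^2 + 4 * (b / N)^2 := by
        field_simp
      rw [e, lam]
      exact add_le_add l1 l2
    have hlampos : 0 < lam N x := lt_of_lt_of_le (by positivity) hlam_lb
    rw [lamInv, if_neg (ne_of_gt hlampos)]
    have hW2 : (W2 N v x)^2 ≤ 4 / (N:ℝ)^2 := by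
      rw [W2]
      rw [show (W N ⊗ₖ W N) v x = W N v.1 x.1 * W N v.2 x.2 from rfl]
      rw [mul_pow]
      have ha := Wsq_le N h1N v.1 x.1
      have hb := Wsq_le N h1N v.2 x.2
      have h2N : (0:ℝ) ≤ 2 / N := by positivity
      calc (W N v.1 x.1)^2 * (W N v.2 x.2)^2 ≤ (2/(N:ℝ)) * (2/(N:ℝ)) :=
            mul_le_mul ha hb (sq_nonneg _) h2N
        _ = 4 / (N:ℝ)^2 := by ring
    have hinvle : (lam N x)⁻¹ ≤ (N:ℝ)^2 / (4 * (a^2 + b^2)) := by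
      have h4 : (0:ℝ) < 4 * (a^2 + b^2) / (N:ℝ)^2 := by positivity
      have := inv_anti₀ h4 hlam_lb
      rw [inv_div] at this
      calc (lam N x)⁻¹ ≤ (N:ℝ)^2 / (4 * (a^2 + b^2)) := this
        _ = (N:ℝ)^2 / (4 * (a^2 + b^2)) := rfl
    calc (lam N x)⁻¹ * (W2 N v x)^2
        ≤ (lam N x)⁻¹ * (4 / (N:ℝ)^2) :=
          mul_le_mul_of_nonneg_left hW2 (inv_nonneg.mpr hlampos.le)
      _ ≤ ((N:ℝ)^2 / (4 * (a^2 + b^2))) * (4 / (N:ℝ)^2) :=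
          mul_le_mul_of_nonneg_right hinvle (by positivity)
      _ = 1 / (a^2 + b^2) := by
          field_simp

end Grid16

/-- Diagonal of the 2D-grid Laplacian pseudoinverse grows at most
logarithmically.  There are absolute constants `C, C' > 0` such that for all `N ≥ 2`,
every diagonal entry of `L†` is at most `C log N`, and consequently every row of
`S = L† Dᵀ` (for `D` an incidence matrix of the grid, i.e. `Dᵀ D = L`) has ℓ2 norm at
most `C' √(log m)` with `m = N²`. -/
theorem grid2d_pseudoinverse_diag_bound :
    ∃ C C' : ℝ, 0 < C ∧ 0 < C' ∧
      ∀ N : ℕ, 2 ≤ N →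
        ∀ Ldag : Matrix (Fin N × Fin N) (Fin N × Fin N) ℝ,
          IsMoorePenrose (gridLap2 N) Ldag →
          (∀ v : Fin N × Fin N, Ldag v v ≤ C * Real.log N) ∧
          ∀ (E : ℕ) (D : Matrix (Fin E) (Fin N × Fin N) ℝ),
            Dᵀ * D = gridLap2 N →
            ∀ v : Fin N × Fin N,
              Real.sqrt (∑ j, ((Ldag * Dᵀ) v j) ^ 2)
                ≤ C' * Real.sqrt (Real.log ((N : ℝ) ^ 2)) := by
  refine ⟨14, Real.sqrt 14, by norm_num, Real.sqrt_pos.mpr (by norm_num), ?_⟩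
  intro N hN Ldag hMP
  have hEq : Ldag = Grid16.Mdag N :=
    Grid16.mp_unique (gridLap2 N) Ldag (Grid16.Mdag N) hMP (Grid16.penrose N hN)
  have hlogpos : 0 < Real.log N :=
    Real.log_pos (by exact_mod_cast hN)
  have hdiag : ∀ v : Fin N × Fin N, Ldag v v ≤ 14 * Real.log N := by
    intro v
    rw [hEq, Grid16.Mdag_diag]
    calc ∑ x : Fin N × Fin N, Grid16.lamInv N x * (Grid16.W2 N v x)^2
        ≤ ∑ x : Fin N × Fin N,
          (if (x.1:ℕ) + (x.2:ℕ) = 0 then 0 else 1 / (((x.1:ℕ):ℝ)^2 + ((x.2:ℕ):ℝ)^2)) :=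
          Finset.sum_le_sum (fun x _ => Grid16.Mdag_term_bound N hN v x)
      _ ≤ 14 * Real.log N := Grid16.sum_invsq_bound N hN
  refine ⟨hdiag, ?_⟩
  intro E D hD v
  have hsym : Ldagᵀ = Ldag := by
    rw [hEq, Grid16.Mdag, Grid16.sandwich_transpose]
  have hprod : (Ldag * Dᵀ) * (Ldag * Dᵀ)ᵀ = Ldag := by
    rw [Matrix.transpose_mul, Matrix.transpose_transpose, hsym]
    calc Ldag * Dᵀ * (D * Ldag) = Ldag * (Dᵀ * D) * Ldag := by
          simp only [Matrix.mul_assoc]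
      _ = Ldag * gridLap2 N * Ldag := by rw [hD]
      _ = Ldag := hMP.2.1
  have hsum : ∑ j, ((Ldag * Dᵀ) v j)^2 = Ldag v v := by
    have h2 : ((Ldag * Dᵀ) * (Ldag * Dᵀ)ᵀ) v v = Ldag v v := by rw [hprod]
    rw [← h2, Matrix.mul_apply]
    apply Finset.sum_congr rfl
    intro j _
    rw [Matrix.transpose_apply]
    ring
  rw [hsum]
  have hlog2 : Real.log ((N:ℝ)^2) = 2 * Real.log N := by
    rw [Real.log_pow]
    push_cast
    ring
  calc Real.sqrt (Ldag v v) ≤ Real.sqrt (14 * Real.log ((N:ℝ)^2)) := by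
        apply Real.sqrt_le_sqrt
        rw [hlog2]
        have := hdiag v
        linarith
    _ = Real.sqrt 14 * Real.sqrt (Real.log ((N:ℝ)^2)) := Real.sqrt_mul (by norm_num) _
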